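/- Let μ > 0, B ≥ 2 an integer, and 0 < τ_{B−1} ≤ τ_{B−2} ≤ … ≤ τ_1 < ∞. Define the B×B matrix P, with rows and columns indexed by {0,…,B−1}, by P_{j,B−1} = G_{B−j}(τ_{B−1}) and P_{j,i} = G_{1+i−j}(τ_i) − G_{2+i−j}(τ_{i+1}) for 0 ≤ i < B−1. Then for all states j, i ∈ {0,…,B−1} there exists an integer k with 1 ≤ k ≤ B−1 such that the (j,i) entry of the matrix power P^k is strictly positive; in particular the Markov chain with transition matrix P is irreducible. -/

import Mathlib

/-- The Erlang CDF `G_m` with rate `μ` and (integer) stage parameter `m`: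
`G_m(t) = 1 - e^(-μt) ∑_{k=0}^{m-1} (μt)^k / k!` for `t ≥ 0` and `m ≥ 1`,
with the conventions `G_m(t) = 0` for `t < 0` and `G_m(t) = 1` for `t ≥ 0` when `m ≤ 0`. -/
noncomputable def erlangCDF (μ : ℝ) (m : ℤ) (t : ℝ) : ℝ :=
  if t < 0 then 0
  else if m ≤ 0 then 1
  else 1 - Real.exp (-(μ * t)) *
    ∑ k ∈ Finset.range m.toNat, (μ * t) ^ k / (Nat.factorial k : ℝ)

open Finset

/-- Derivative of the truncated exponential series. -/
lemma hasDerivAt_partialExp (n : ℕ) (x : ℝ) :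
    HasDerivAt (fun y : ℝ => ∑ k ∈ range n, y ^ k / (Nat.factorial k : ℝ))
      (∑ k ∈ range (n - 1), x ^ k / (Nat.factorial k : ℝ)) x := by
  induction n with
  | zero => simpa using hasDerivAt_const x (0 : ℝ)
  | succ n ih =>
    have h1 : HasDerivAt (fun y : ℝ => y ^ n / (Nat.factorial n : ℝ))
        ((n : ℝ) * x ^ (n - 1) / (Nat.factorial n : ℝ)) x :=
      (hasDerivAt_pow n x).div_const _
    have h2 := ih.add h1
    have hfun : (fun y : ℝ => (∑ k ∈ range n, y ^ k / (Nat.factorial k : ℝ)) +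
        y ^ n / (Nat.factorial n : ℝ)) =
        fun y : ℝ => ∑ k ∈ range (n + 1), y ^ k / (Nat.factorial k : ℝ) := by
      funext y; rw [Finset.sum_range_succ]
    change HasDerivAt (fun y : ℝ => (∑ k ∈ range n, y ^ k / (Nat.factorial k : ℝ)) +
        y ^ n / (Nat.factorial n : ℝ)) _ x at h2
    rw [hfun] at h2
    have hval : (∑ k ∈ range (n - 1), x ^ k / (Nat.factorial k : ℝ)) +
        (n : ℝ) * x ^ (n - 1) / (Nat.factorial n : ℝ) =
        ∑ k ∈ range (n + 1 - 1), x ^ k / (Nat.factorial k : ℝ) := by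
      rcases Nat.eq_zero_or_pos n with hn | hn
      · subst hn; simp
      · have : n = (n - 1) + 1 := (Nat.succ_pred_eq_of_pos hn).symm
        rw [Nat.add_sub_cancel]
        conv_rhs => rw [← Nat.succ_pred_eq_of_pos hn, Finset.sum_range_succ]
        congr 1
        rw [this, Nat.add_sub_cancel]
        rw [Nat.factorial_succ]
        push_cast
        field_simp
        rw [Nat.pred_eq_sub_one, Nat.add_sub_cancel]
        ring
    rw [hval] at h2
    exact h2

lemma hasDerivAt_expSum (n : ℕ) (x : ℝ) :
    HasDerivAt (fun y : ℝ => Real.exp (-y) * ∑ k ∈ range n, y ^ k / (Nat.factorial k : ℝ))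
      (Real.exp (-x) * (-1) * (∑ k ∈ range n, x ^ k / (Nat.factorial k : ℝ)) +
        Real.exp (-x) * ∑ k ∈ range (n - 1), x ^ k / (Nat.factorial k : ℝ)) x := by
  have hexp : HasDerivAt (fun y : ℝ => Real.exp (-y)) (Real.exp (-x) * (-1)) x := by
    simpa using (hasDerivAt_neg x).exp
  exact hexp.mul (hasDerivAt_partialExp n x)

lemma partialExp_antitone (n : ℕ) :
    AntitoneOn (fun x : ℝ => Real.exp (-x) * ∑ k ∈ range n, x ^ k / (Nat.factorial k : ℝ))
      (Set.Ici 0) := by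
  apply antitoneOn_of_deriv_nonpos (convex_Ici 0)
  · exact Continuous.continuousOn (by continuity)
  · intro x _
    exact (hasDerivAt_expSum n x).differentiableAt.differentiableWithinAt
  · intro x hx
    rw [interior_Ici] at hx
    rw [(hasDerivAt_expSum n x).deriv]
    have hsub : ∑ k ∈ range (n - 1), x ^ k / (Nat.factorial k : ℝ) ≤
        ∑ k ∈ range n, x ^ k / (Nat.factorial k : ℝ) := by
      apply Finset.sum_le_sum_of_subset_of_nonneg
      · exact Finset.range_subset_range.2 (Nat.sub_le n 1)
      · intro k _ _
        have hx0 : (0:ℝ) ≤ x := (Set.mem_Ioi.1 hx).le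
        exact div_nonneg (pow_nonneg hx0 k) (by positivity)
    nlinarith [Real.exp_pos (-x), hsub]

section ErlangLemmas

variable {μ : ℝ}

lemma erlang_nonneg (hμ : 0 ≤ μ) (m : ℤ) (t : ℝ) : 0 ≤ erlangCDF μ m t := by
  unfold erlangCDF
  split_ifs with h1 h2
  · exact le_refl 0
  · exact zero_le_one
  · have ht : 0 ≤ t := le_of_not_gt h1
    have hx : 0 ≤ μ * t := mul_nonneg hμ ht
    have hsum := Real.sum_le_exp_of_nonneg hx m.toNat
    have h3 : Real.exp (-(μ * t)) * ∑ k ∈ range m.toNat, (μ * t) ^ k / (Nat.factorial k : ℝ)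
        ≤ Real.exp (-(μ * t)) * Real.exp (μ * t) := by
      exact mul_le_mul_of_nonneg_left hsum (Real.exp_pos _).le
    rw [← Real.exp_add] at h3
    simp at h3
    linarith

lemma erlang_le_one (hμ : 0 ≤ μ) (m : ℤ) (t : ℝ) : erlangCDF μ m t ≤ 1 := by
  unfold erlangCDF
  split_ifs with h1 h2
  · exact zero_le_one
  · exact le_refl 1
  · have ht : 0 ≤ t := le_of_not_gt h1
    have hx : 0 ≤ μ * t := mul_nonneg hμ ht
    have : 0 ≤ Real.exp (-(μ * t)) *
        ∑ k ∈ range m.toNat, (μ * t) ^ k / (Nat.factorial k : ℝ) := by positivity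
    linarith

lemma erlang_pos (hμ : 0 < μ) {m : ℤ} (hm : 1 ≤ m) {t : ℝ} (ht : 0 < t) :
    0 < erlangCDF μ m t := by
  unfold erlangCDF
  rw [if_neg (not_lt.2 ht.le), if_neg (by omega)]
  have hx : 0 < μ * t := mul_pos hμ ht
  have hsum := Real.sum_le_exp_of_nonneg hx.le (m.toNat + 1)
  rw [Finset.sum_range_succ] at hsum
  have hterm : 0 < (μ * t) ^ m.toNat / (Nat.factorial m.toNat : ℝ) := by positivity
  have hlt : ∑ k ∈ range m.toNat, (μ * t) ^ k / (Nat.factorial k : ℝ) < Real.exp (μ * t) := by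
    linarith
  have h3 : Real.exp (-(μ * t)) * ∑ k ∈ range m.toNat, (μ * t) ^ k / (Nat.factorial k : ℝ)
      < Real.exp (-(μ * t)) * Real.exp (μ * t) :=
    mul_lt_mul_of_pos_left hlt (Real.exp_pos _)
  rw [← Real.exp_add] at h3
  simp at h3
  linarith

lemma erlang_lt_one (hμ : 0 ≤ μ) {m : ℤ} (hm : 1 ≤ m) {t : ℝ} (ht : 0 ≤ t) :
    erlangCDF μ m t < 1 := by
  unfold erlangCDF
  rw [if_neg (not_lt.2 ht), if_neg (by omega)]
  have hx : 0 ≤ μ * t := mul_nonneg hμ ht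
  have hmem : 0 ∈ range m.toNat := Finset.mem_range.2 (by omega)
  have hsum : 0 < ∑ k ∈ range m.toNat, (μ * t) ^ k / (Nat.factorial k : ℝ) := by
    apply Finset.sum_pos' (fun k _ => by positivity)
    exact ⟨0, hmem, by norm_num⟩
  have : 0 < Real.exp (-(μ * t)) *
      ∑ k ∈ range m.toNat, (μ * t) ^ k / (Nat.factorial k : ℝ) := by
    exact mul_pos (Real.exp_pos _) hsum
  linarith

lemma erlang_succ_le (hμ : 0 ≤ μ) (m : ℤ) (t : ℝ) :
    erlangCDF μ (m + 1) t ≤ erlangCDF μ m t := by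
  unfold erlangCDF
  split_ifs with h1 h2 h3 h3
  · exact le_refl 0
  · exact le_refl 1
  · omega
  · -- m + 1 ≥ 1, m ≤ 0 ⇒ m = 0, (m+1).toNat = 1
    have hm : m = 0 := by omega
    have ht : 0 ≤ t := le_of_not_gt h1
    have hx : 0 ≤ μ * t := mul_nonneg hμ ht
    have : 0 ≤ Real.exp (-(μ * t)) *
        ∑ k ∈ range (m + 1).toNat, (μ * t) ^ k / (Nat.factorial k : ℝ) := by positivity
    linarith
  · have ht : 0 ≤ t := le_of_not_gt h1
    have hx : 0 ≤ μ * t := mul_nonneg hμ ht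
    have htn : (m + 1).toNat = m.toNat + 1 := by omega
    rw [htn, Finset.sum_range_succ]
    have hterm : 0 ≤ (μ * t) ^ m.toNat / (Nat.factorial m.toNat : ℝ) := by positivity
    have hexp := (Real.exp_pos (-(μ * t))).le
    nlinarith

lemma erlang_succ_lt (hμ : 0 < μ) {m : ℤ} (hm : 0 ≤ m) {t : ℝ} (ht : 0 < t) :
    erlangCDF μ (m + 1) t < erlangCDF μ m t := by
  unfold erlangCDF
  rw [if_neg (not_lt.2 ht.le), if_neg (not_lt.2 ht.le), if_neg (by omega)]
  have hx : 0 < μ * t := mul_pos hμ ht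
  split_ifs with h2
  · -- m = 0, (m+1).toNat = 1
    have hm0 : m = 0 := by omega
    subst hm0
    have : (0 + 1 : ℤ).toNat = 1 := by norm_num
    rw [this]
    simp [Finset.sum_range_one]
    exact Real.exp_pos _
  · have htn : (m + 1).toNat = m.toNat + 1 := by omega
    rw [htn, Finset.sum_range_succ]
    have hterm : 0 < (μ * t) ^ m.toNat / (Nat.factorial m.toNat : ℝ) := by positivity
    have hexp := Real.exp_pos (-(μ * t))
    nlinarith

lemma erlang_mono (hμ : 0 ≤ μ) (m : ℤ) {t s : ℝ} (ht : 0 ≤ t) (hts : t ≤ s) :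
    erlangCDF μ m t ≤ erlangCDF μ m s := by
  have hs : 0 ≤ s := ht.trans hts
  unfold erlangCDF
  rw [if_neg (not_lt.2 ht), if_neg (not_lt.2 hs)]
  split_ifs with h2
  · exact le_refl 1
  · have hxt : (0 : ℝ) ≤ μ * t := mul_nonneg hμ ht
    have hxs : (0 : ℝ) ≤ μ * s := mul_nonneg hμ hs
    have hle : μ * t ≤ μ * s := mul_le_mul_of_nonneg_left hts hμ
    have h := partialExp_antitone m.toNat (Set.mem_Ici.2 hxt) (Set.mem_Ici.2 hxs) hle
    simp only at h
    linarith

end ErlangLemmas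

lemma pow_entry_nonneg {B : ℕ} (P : Matrix (Fin B) (Fin B) ℝ)
    (h : ∀ j i, 0 ≤ P j i) : ∀ k (j i : Fin B), 0 ≤ (P ^ k) j i := by
  intro k
  induction k with
  | zero =>
    intro j i
    rw [pow_zero]
    by_cases hji : j = i
    · simp [Matrix.one_apply, hji]
    · simp [Matrix.one_apply, hji]
  | succ k ih =>
    intro j i
    rw [pow_succ, Matrix.mul_apply]
    exact Finset.sum_nonneg fun l _ => mul_nonneg (ih j l) (h l i)

lemma pow_entry_pos_step {B : ℕ} (P : Matrix (Fin B) (Fin B) ℝ)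
    (h : ∀ j i, 0 ≤ P j i) {k : ℕ} {j l i : Fin B}
    (h1 : 0 < P j l) (h2 : 0 < (P ^ k) l i) : 0 < (P ^ (k + 1)) j i := by
  rw [pow_succ', Matrix.mul_apply]
  apply Finset.sum_pos'
  · intro x _
    exact mul_nonneg (h j x) (pow_entry_nonneg P h k x i)
  · exact ⟨l, Finset.mem_univ l, mul_pos h1 h2⟩

/-- For `μ > 0`, integer `B ≥ 2` and thresholds
`0 < τ (B-1) ≤ τ (B-2) ≤ … ≤ τ 1 < ∞`, the `B × B` transition matrix `P` given by
`P j (B-1) = G_{B-j}(τ (B-1))` and `P j i = G_{1+i-j}(τ i) - G_{2+i-j}(τ (i+1))` for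
`0 ≤ i < B-1` (where, for `i = 0`, the convention `τ 0 = +∞` makes the first term equal `1`)
is irreducible: for all states `j, i` there is a `k` with `1 ≤ k ≤ B-1` such that the
`(j,i)` entry of `P^k` is strictly positive. -/
theorem transition_matrix_irreducible (μ : ℝ) (hμ : 0 < μ) (B : ℕ) (hB : 2 ≤ B)
    (τ : ℕ → ℝ) (hpos : 0 < τ (B - 1))
    (hmono : ∀ m, 1 ≤ m → m + 1 ≤ B - 1 → τ (m + 1) ≤ τ m)
    (P : Matrix (Fin B) (Fin B) ℝ)
    (hP : ∀ j i : Fin B, P j i =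
      if (i : ℕ) = B - 1 then erlangCDF μ ((B : ℤ) - ((j : ℕ) : ℤ)) (τ (B - 1))
      else if (i : ℕ) = 0 then 1 - erlangCDF μ (2 - ((j : ℕ) : ℤ)) (τ 1)
      else erlangCDF μ (1 + ((i : ℕ) : ℤ) - ((j : ℕ) : ℤ)) (τ (i : ℕ))
        - erlangCDF μ (2 + ((i : ℕ) : ℤ) - ((j : ℕ) : ℤ)) (τ ((i : ℕ) + 1))) :
    ∀ j i : Fin B, ∃ k : ℕ, 1 ≤ k ∧ k ≤ B - 1 ∧ 0 < (P ^ k) j i := by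
  -- thresholds are positive
  have hchain : ∀ d i, 1 ≤ i → i + d = B - 1 → τ (B - 1) ≤ τ i := by
    intro d
    induction d with
    | zero =>
      intro i h1 h2
      simp only [Nat.add_zero] at h2
      rw [h2]
    | succ d ih =>
      intro i h1 h2
      have h3 := ih (i + 1) (by omega) (by omega)
      exact h3.trans (hmono i h1 (by omega))
  have hτ : ∀ i, 1 ≤ i → i ≤ B - 1 → 0 < τ i := by
    intro i h1 h2
    exact lt_of_lt_of_le hpos (hchain (B - 1 - i) i h1 (by omega))
  -- positivity of one-step transitions going down by at most one
  have ppos : ∀ j i : Fin B, (j : ℕ) ≤ (i : ℕ) + 1 → 0 < P j i := by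
    intro j i hji
    have hjB : (j : ℕ) < B := j.isLt
    have hiB : (i : ℕ) < B := i.isLt
    rw [hP]
    split_ifs with h1 h2
    · exact erlang_pos hμ (by omega) hpos
    · have hj1 : (j : ℕ) ≤ 1 := by omega
      have hτ1 : 0 < τ 1 := hτ 1 le_rfl (by omega)
      have := erlang_lt_one hμ.le (m := 2 - ((j : ℕ) : ℤ)) (by omega) hτ1.le
      linarith
    · -- middle column: 1 ≤ i ≤ B - 2
      have hi1 : 1 ≤ (i : ℕ) := by omega
      have hi2 : (i : ℕ) + 1 ≤ B - 1 := by omega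
      have hτi : 0 < τ (i : ℕ) := hτ _ hi1 (by omega)
      have hτi1 : 0 < τ ((i : ℕ) + 1) := hτ _ (by omega) hi2
      have hmle : τ ((i : ℕ) + 1) ≤ τ (i : ℕ) := hmono _ hi1 hi2
      have hm0 : (0 : ℤ) ≤ 1 + ((i : ℕ) : ℤ) - ((j : ℕ) : ℤ) := by omega
      have hstrict := erlang_succ_lt hμ hm0 hτi1
      have heq : (1 + ((i : ℕ) : ℤ) - ((j : ℕ) : ℤ)) + 1 =
          2 + ((i : ℕ) : ℤ) - ((j : ℕ) : ℤ) := by ring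
      rw [heq] at hstrict
      have hmon := erlang_mono hμ.le (1 + ((i : ℕ) : ℤ) - ((j : ℕ) : ℤ)) hτi1.le hmle
      linarith
  -- nonnegativity of all entries
  have pnn : ∀ j i : Fin B, 0 ≤ P j i := by
    intro j i
    have hiB : (i : ℕ) < B := i.isLt
    rw [hP]
    split_ifs with h1 h2
    · exact erlang_nonneg hμ.le _ _
    · have := erlang_le_one hμ.le (2 - ((j : ℕ) : ℤ)) (τ 1)
      linarith
    · have hi1 : 1 ≤ (i : ℕ) := by omega
      have hi2 : (i : ℕ) + 1 ≤ B - 1 := by omega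
      have hτi : 0 < τ (i : ℕ) := hτ _ hi1 (by omega)
      have hτi1 : 0 < τ ((i : ℕ) + 1) := hτ _ (by omega) hi2
      have hmle : τ ((i : ℕ) + 1) ≤ τ (i : ℕ) := hmono _ hi1 hi2
      have hsucc := erlang_succ_le hμ.le (1 + ((i : ℕ) : ℤ) - ((j : ℕ) : ℤ)) (τ ((i : ℕ) + 1))
      have heq : (1 + ((i : ℕ) : ℤ) - ((j : ℕ) : ℤ)) + 1 =
          2 + ((i : ℕ) : ℤ) - ((j : ℕ) : ℤ) := by ring
      rw [heq] at hsucc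
      have hmon := erlang_mono hμ.le (1 + ((i : ℕ) : ℤ) - ((j : ℕ) : ℤ)) hτi1.le hmle
      linarith
  -- path positivity for descending chains
  have key : ∀ d (j i : Fin B), 1 ≤ d → (j : ℕ) = (i : ℕ) + d → 0 < (P ^ d) j i := by
    intro d
    induction d with
    | zero => intro j i h; omega
    | succ d ih =>
      intro j i _ hji
      rcases Nat.eq_zero_or_pos d with hd | hd
      · subst hd
        rw [pow_one]
        exact ppos j i (by omega)
      · have hlt : (i : ℕ) + d < B := by
          have := j.isLt
          omega
        set l : Fin B := ⟨(i : ℕ) + d, hlt⟩ with hl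
        have h1 : 0 < P j l := ppos j l (by simp [hl]; omega)
        have h2 : 0 < (P ^ d) l i := ih l i hd (by simp [hl])
        exact pow_entry_pos_step P pnn h1 h2
  intro j i
  by_cases hcase : (j : ℕ) ≤ (i : ℕ) + 1
  · refine ⟨1, le_rfl, by omega, ?_⟩
    rw [pow_one]
    exact ppos j i hcase
  · refine ⟨(j : ℕ) - (i : ℕ), by omega, ?_, ?_⟩
    · have := j.isLt
      omega
    · exact key _ j i (by omega) (by omega)
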